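/- There is an F_2-algebra isomorphism B(Z_2) ≅ B(Z_2)^{op} sending ρ_k to ρ_{8−k} for k = 1,…,7 and the idempotents i_0, i_1, i_2, i_3 to i_3, i_2, i_1, i_0 respectively. -/

import Mathlib

open FreeAlgebra

/-- Generators of the path algebra `B(Z_2)`: four vertex idempotents and seven arrows. -/
inductive Gen2 : Type
  | e : Fin 4 → Gen2
  | r : Fin 7 → Gen2

/-- Sources of the arrows ρ₁,…,ρ₇. -/
def src2 : Fin 7 → Fin 4 := ![0, 1, 0, 1, 2, 3, 2]

/-- Targets of the arrows ρ₁,…,ρ₇. -/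
def tgt2 : Fin 7 → Fin 4 := ![1, 0, 1, 2, 3, 2, 3]

/-- Relations presenting `B(Z_2)` as a quotient of the free algebra: the path-algebra
relations for the quiver together with ρ₁ρ₄ = ρ₄ρ₇ = ρ₂ρ₁ = ρ₃ρ₂ = ρ₆ρ₅ = ρ₇ρ₆ = 0. -/
inductive Rel2 : FreeAlgebra (ZMod 2) Gen2 → FreeAlgebra (ZMod 2) Gen2 → Prop
  | idem (k : Fin 4) :
      Rel2 (ι (ZMod 2) (Gen2.e k) * ι (ZMod 2) (Gen2.e k)) (ι (ZMod 2) (Gen2.e k))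
  | orth (k l : Fin 4) (h : k ≠ l) : Rel2 (ι (ZMod 2) (Gen2.e k) * ι (ZMod 2) (Gen2.e l)) 0
  | sum : Rel2 (∑ k : Fin 4, ι (ZMod 2) (Gen2.e k)) 1
  | source (m : Fin 7) :
      Rel2 (ι (ZMod 2) (Gen2.e (src2 m)) * ι (ZMod 2) (Gen2.r m)) (ι (ZMod 2) (Gen2.r m))
  | target (m : Fin 7) :
      Rel2 (ι (ZMod 2) (Gen2.r m) * ι (ZMod 2) (Gen2.e (tgt2 m))) (ι (ZMod 2) (Gen2.r m))
  | rel14 : Rel2 (ι (ZMod 2) (Gen2.r 0) * ι (ZMod 2) (Gen2.r 3)) 0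
  | rel47 : Rel2 (ι (ZMod 2) (Gen2.r 3) * ι (ZMod 2) (Gen2.r 6)) 0
  | rel21 : Rel2 (ι (ZMod 2) (Gen2.r 1) * ι (ZMod 2) (Gen2.r 0)) 0
  | rel32 : Rel2 (ι (ZMod 2) (Gen2.r 2) * ι (ZMod 2) (Gen2.r 1)) 0
  | rel65 : Rel2 (ι (ZMod 2) (Gen2.r 5) * ι (ZMod 2) (Gen2.r 4)) 0
  | rel76 : Rel2 (ι (ZMod 2) (Gen2.r 6) * ι (ZMod 2) (Gen2.r 5)) 0

/-- The genus-2 bordered algebra `B(Z_2)`. -/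
abbrev B2 : Type := RingQuot Rel2

/-- The idempotents i₀, i₁, i₂, i₃ in `B(Z_2)`. -/
noncomputable def idem2 (k : Fin 4) : B2 :=
  RingQuot.mkAlgHom (ZMod 2) Rel2 (ι (ZMod 2) (Gen2.e k))

/-- The arrows ρ₁,…,ρ₇ in `B(Z_2)` (indexed by `Fin 7`). -/
noncomputable def arr2 (m : Fin 7) : B2 :=
  RingQuot.mkAlgHom (ZMod 2) Rel2 (ι (ZMod 2) (Gen2.r m))

/-- The arrow ρ_k in `B(Z_2)`, using 1-based indexing; `0` for out-of-range indices. -/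
noncomputable def ρ2 (k : ℕ) : B2 :=
  if h : 1 ≤ k ∧ k ≤ 7 then arr2 ⟨k - 1, by omega⟩ else 0

/-- The chord ρ_{[i,j]} = ρ_i ρ_{i+1} ⋯ ρ_j in `B(Z_2)` (1-based indices). -/
noncomputable def chord2 (i j : ℕ) : B2 :=
  ((List.range' i (j + 1 - i)).map ρ2).prod


-- auxiliary
lemma mk_rel {a b} (h : Rel2 a b) :
    RingQuot.mkAlgHom (ZMod 2) Rel2 a = RingQuot.mkAlgHom (ZMod 2) Rel2 b :=
  RingQuot.mkAlgHom_rel _ h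

lemma idem2_mul_self (k : Fin 4) : idem2 k * idem2 k = idem2 k := by
  simpa [idem2, map_mul] using mk_rel (Rel2.idem k)

lemma idem2_mul_ne {k l : Fin 4} (h : k ≠ l) : idem2 k * idem2 l = 0 := by
  simpa [idem2, map_mul] using mk_rel (Rel2.orth k l h)

lemma sum_idem2 : ∑ k : Fin 4, idem2 k = 1 := by
  simpa [idem2, map_sum] using mk_rel Rel2.sum

lemma idem2_src (m : Fin 7) : idem2 (src2 m) * arr2 m = arr2 m := by
  simpa [idem2, arr2, map_mul] using mk_rel (Rel2.source m)

lemma arr2_tgt (m : Fin 7) : arr2 m * idem2 (tgt2 m) = arr2 m := by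
  simpa [idem2, arr2, map_mul] using mk_rel (Rel2.target m)

lemma arr14 : arr2 0 * arr2 3 = 0 := by simpa [arr2, map_mul] using mk_rel Rel2.rel14
lemma arr47 : arr2 3 * arr2 6 = 0 := by simpa [arr2, map_mul] using mk_rel Rel2.rel47
lemma arr21 : arr2 1 * arr2 0 = 0 := by simpa [arr2, map_mul] using mk_rel Rel2.rel21
lemma arr32 : arr2 2 * arr2 1 = 0 := by simpa [arr2, map_mul] using mk_rel Rel2.rel32
lemma arr65 : arr2 5 * arr2 4 = 0 := by simpa [arr2, map_mul] using mk_rel Rel2.rel65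
lemma arr76 : arr2 6 * arr2 5 = 0 := by simpa [arr2, map_mul] using mk_rel Rel2.rel76

noncomputable def gmap : Gen2 → B2ᵐᵒᵖ
  | Gen2.e k => MulOpposite.op (idem2 (3 - k))
  | Gen2.r m => MulOpposite.op (arr2 (6 - m))

noncomputable def f0 : FreeAlgebra (ZMod 2) Gen2 →ₐ[ZMod 2] B2ᵐᵒᵖ :=
  FreeAlgebra.lift _ gmap

lemma tgt_src : ∀ m : Fin 7, tgt2 (6 - m) = 3 - src2 m := by decide
lemma src_tgt : ∀ m : Fin 7, src2 (6 - m) = 3 - tgt2 m := by decide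

lemma f0_rel : ∀ ⦃a b⦄, Rel2 a b → f0 a = f0 b := by
  intro a b h
  induction h with
  | idem k =>
      simp only [f0, map_mul, FreeAlgebra.lift_ι_apply, gmap, ← MulOpposite.op_mul,
        idem2_mul_self]
  | orth k l h =>
      have h' : (3 - l : Fin 4) ≠ 3 - k := by
        revert h; revert k l; decide
      simp only [f0, map_mul, FreeAlgebra.lift_ι_apply, gmap, ← MulOpposite.op_mul,
        idem2_mul_ne h', map_zero, MulOpposite.op_zero]
  | sum =>
      have : ∑ k : Fin 4, idem2 (3 - k) = 1 := by
        rw [← sum_idem2]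
        exact Fintype.sum_equiv (Equiv.subLeft 3) _ _ (fun k => rfl)
      have hop : ∑ x : Fin 4, MulOpposite.op (idem2 (3 - x))
          = MulOpposite.op (∑ x : Fin 4, idem2 (3 - x)) :=
        (map_sum (MulOpposite.opAddEquiv : B2 ≃+ B2ᵐᵒᵖ) _ _).symm
      simp only [f0, map_sum, FreeAlgebra.lift_ι_apply, gmap, hop, this,
        MulOpposite.op_one, map_one]
  | source m =>
      have := arr2_tgt (6 - m)
      rw [tgt_src m] at this
      simp only [f0, map_mul, FreeAlgebra.lift_ι_apply, gmap, ← MulOpposite.op_mul, this]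
  | target m =>
      have := idem2_src (6 - m)
      rw [src_tgt m] at this
      simp only [f0, map_mul, FreeAlgebra.lift_ι_apply, gmap, ← MulOpposite.op_mul, this]
  | rel14 =>
      simp only [f0, map_mul, FreeAlgebra.lift_ι_apply, gmap, ← MulOpposite.op_mul, map_zero]
      rw [← MulOpposite.op_zero]; congr 1; convert arr47 using 3 <;> decide
  | rel47 =>
      simp only [f0, map_mul, FreeAlgebra.lift_ι_apply, gmap, ← MulOpposite.op_mul, map_zero]
      rw [← MulOpposite.op_zero]; congr 1; convert arr14 using 3 <;> decide
  | rel21 =>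
      simp only [f0, map_mul, FreeAlgebra.lift_ι_apply, gmap, ← MulOpposite.op_mul, map_zero]
      rw [← MulOpposite.op_zero]; congr 1; convert arr76 using 3 <;> decide
  | rel32 =>
      simp only [f0, map_mul, FreeAlgebra.lift_ι_apply, gmap, ← MulOpposite.op_mul, map_zero]
      rw [← MulOpposite.op_zero]; congr 1; convert arr65 using 3 <;> decide
  | rel65 =>
      simp only [f0, map_mul, FreeAlgebra.lift_ι_apply, gmap, ← MulOpposite.op_mul, map_zero]
      rw [← MulOpposite.op_zero]; congr 1; convert arr32 using 3 <;> decide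
  | rel76 =>
      simp only [f0, map_mul, FreeAlgebra.lift_ι_apply, gmap, ← MulOpposite.op_mul, map_zero]
      rw [← MulOpposite.op_zero]; congr 1; convert arr21 using 3 <;> decide

lemma sub_sub_four : ∀ k : Fin 4, (3 - (3 - k) : Fin 4) = k := by decide
lemma sub_sub_seven : ∀ m : Fin 7, (6 - (6 - m) : Fin 7) = m := by decide

noncomputable def fB : B2 →ₐ[ZMod 2] B2ᵐᵒᵖ :=
  RingQuot.liftAlgHom (ZMod 2) ⟨f0, f0_rel⟩

lemma fB_mk (a : FreeAlgebra (ZMod 2) Gen2) :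
    fB (RingQuot.mkAlgHom (ZMod 2) Rel2 a) = f0 a :=
  RingQuot.liftAlgHom_mkAlgHom_apply _ _ _ _

lemma fB_idem (k : Fin 4) : fB (idem2 k) = MulOpposite.op (idem2 (3 - k)) := by
  simp [idem2, fB_mk, f0, gmap]

lemma fB_arr (m : Fin 7) : fB (arr2 m) = MulOpposite.op (arr2 (6 - m)) := by
  simp [arr2, fB_mk, f0, gmap]

noncomputable def fB' : B2ᵐᵒᵖ →ₐ[ZMod 2] B2 :=
  ((AlgEquiv.opOp (ZMod 2) B2).symm.toAlgHom).comp (AlgHom.op fB)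

lemma fB'_op (x : B2) : fB' (MulOpposite.op x) = (fB x).unop := rfl

lemma left_inv : ∀ x : B2, fB' (fB x) = x := by
  have : fB'.comp fB = AlgHom.id (ZMod 2) B2 := by
    apply RingQuot.ringQuot_ext'
    apply FreeAlgebra.hom_ext
    funext g
    cases g with
    | e k =>
        show fB' (fB (idem2 k)) = idem2 k
        rw [fB_idem, fB'_op, fB_idem, sub_sub_four, MulOpposite.unop_op]
    | r m =>
        show fB' (fB (arr2 m)) = arr2 m
        rw [fB_arr, fB'_op, fB_arr, sub_sub_seven, MulOpposite.unop_op]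
  exact fun x => DFunLike.congr_fun this x

lemma fB_surj : Function.Surjective fB := by
  intro y
  obtain ⟨x, rfl⟩ : ∃ x : B2, MulOpposite.op x = y := ⟨y.unop, rfl⟩
  obtain ⟨a, rfl⟩ := RingQuot.mkAlgHom_surjective (ZMod 2) Rel2 x
  induction a with
  | grade0 r =>
      exact ⟨algebraMap _ _ r, by simp⟩
  | grade1 g =>
      cases g with
      | e k =>
          refine ⟨idem2 (3 - k), ?_⟩
          rw [fB_idem, sub_sub_four]; rfl
      | r m =>
          refine ⟨arr2 (6 - m), ?_⟩
          rw [fB_arr, sub_sub_seven]; rfl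
  | mul a b ha hb =>
      obtain ⟨u, hu⟩ := ha
      obtain ⟨v, hv⟩ := hb
      exact ⟨v * u, by rw [map_mul, hu, hv, map_mul, ← MulOpposite.op_mul]⟩
  | add a b ha hb =>
      obtain ⟨u, hu⟩ := ha
      obtain ⟨v, hv⟩ := hb
      exact ⟨u + v, by rw [map_add, hu, hv, map_add, ← MulOpposite.op_add]⟩


/-- there is an F_2-algebra isomorphism B(Z_2) ≅ B(Z_2)^op sending
rho_k to rho_{8-k} and i_k to i_{3-k}. -/
theorem stmt_7 :
    ∃ φ : B2 ≃ₐ[ZMod 2] B2ᵐᵒᵖ,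
      (∀ k : ℕ, 1 ≤ k → k ≤ 7 → φ (ρ2 k) = MulOpposite.op (ρ2 (8 - k))) ∧
      (∀ k : Fin 4, φ (idem2 k) = MulOpposite.op (idem2 (3 - k))) := by
  have hinj : Function.Injective fB := Function.LeftInverse.injective left_inv
  refine ⟨AlgEquiv.ofBijective fB ⟨hinj, fB_surj⟩, ?_, ?_⟩
  · intro k h1 h7
    have : (AlgEquiv.ofBijective fB ⟨hinj, fB_surj⟩ : B2 → B2ᵐᵒᵖ) = fB := rfl
    rw [this]
    interval_cases k <;>
      simp only [ρ2, show (1:ℕ) ≤ 1 ∧ (1:ℕ) ≤ 7 by omega] <;>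
      norm_num <;> rw [fB_arr] <;> congr 1 <;> decide
  · intro k
    exact fB_idem k
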